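/- Let C be a Cartan scheme and R a root system of type C. If a ∈ A and i, j ∈ I satisfy m_{i,j}^a = 3 (equivalently c^a_{ij} = c^a_{ji} = −1), then for all l ∈ I: c^{ρ_i(a)}_{il} + c^{ρ_i(a)}_{jl} = c^{ρ_iρ_j(a)}_{il} + c^{ρ_iρ_j(a)}_{jl}. -/

import Mathlib

/-- The standard basis vector `α i` of `ℤ^I`. -/
def alphaV {I : Type*} [DecidableEq I] (i : I) : I → ℤ := fun j => if j = i then 1 else 0

/-- The reflection `σ_i^a` on `ℤ^I`, determined by `σ_i^a(α_j) = α_j - c^a_{ij} α_i`. -/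
def reflMap {I A : Type*} [DecidableEq I] [Fintype I] (c : A → I → I → ℤ) (a : A) (i : I)
    (v : I → ℤ) : I → ℤ :=
  v - (∑ j, c a i j * v j) • alphaV i

/-- The set `R^a ∩ (ℕ_0 α_i + ℕ_0 α_j)`. -/
def coneIJ {I : Type*} [DecidableEq I] (R : Set (I → ℤ)) (i j : I) : Set (I → ℤ) :=
  R ∩ {v | ∃ p q : ℕ, v = (p : ℤ) • alphaV i + (q : ℤ) • alphaV j}

/-- Axioms (R1)–(R4) of a root system of type `𝒞`. -/
structure IsRootSystem {I A : Type*} [DecidableEq I] [Fintype I]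
    (ρ : I → A → A) (c : A → I → I → ℤ) (R : A → Set (I → ℤ)) : Prop where
  R1 : ∀ a, R a = {v ∈ R a | ∀ i, 0 ≤ v i} ∪ -{v ∈ R a | ∀ i, 0 ≤ v i}
  R2 : ∀ a i, R a ∩ {v | ∃ z : ℤ, v = z • alphaV i} = {alphaV i, -alphaV i}
  R3 : ∀ a i, (reflMap c a i) '' R a = R (ρ i a)
  R4 : ∀ a i j, i ≠ j → (coneIJ (R a) i j).Finite →
      ((ρ i ∘ ρ j)^[(coneIJ (R a) i j).ncard] a) = a

/-- Axioms of a Cartan scheme: `(C1)`, `(C2)` and generalized Cartan matrices. -/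
structure IsCartanScheme {I A : Type*} (ρ : I → A → A) (c : A → I → I → ℤ) : Prop where
  C1 : ∀ i a, ρ i (ρ i a) = a
  M1diag : ∀ a i, c a i i = 2
  M1off : ∀ a i j, i ≠ j → c a i j ≤ 0
  M2 : ∀ a i j, c a i j = 0 → c a j i = 0
  C2 : ∀ a i j, c a i j = c (ρ i a) i j

section Aux

variable {I A : Type*} [DecidableEq I] [Fintype I]
variable {ρ : I → A → A} {c : A → I → I → ℤ} {R : A → Set (I → ℤ)}

lemma alphaV_self (i : I) : alphaV i i = 1 := by simp [alphaV]

lemma alphaV_ne {k m : I} (h : m ≠ k) : alphaV k m = 0 := by simp [alphaV, h]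

lemma finite_of_ncard3 {α : Type*} {s : Set α} (h : s.ncard = 3) : s.Finite := by
  by_contra hinf
  rw [Set.Infinite.ncard hinf] at h
  exact absurd h (by norm_num)

lemma reflMap_apply (x : A) (k : I) (v : I → ℤ) (m : I) :
    reflMap c x k v m = v m - (∑ n, c x k n * v n) * alphaV k m := rfl

lemma reflMap_apply_ne {x : A} {k : I} {v : I → ℤ} {m : I} (h : m ≠ k) :
    reflMap c x k v m = v m := by
  rw [reflMap_apply, alphaV_ne h, mul_zero, sub_zero]

lemma reflMap_apply_self {x : A} {k : I} {v : I → ℤ} :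
    reflMap c x k v k = v k - ∑ n, c x k n * v n := by
  rw [reflMap_apply, alphaV_self, mul_one]

lemma sum_mul_alphaV (x : A) (k m : I) : ∑ n, c x k n * alphaV m n = c x k m := by
  simp [alphaV, mul_ite, Finset.sum_ite_eq']

lemma sum_offIJ {i j : I} (hij : i ≠ j) (x : A) (k : I) (v w : I → ℤ)
    (hvw : ∀ m, m ≠ i → m ≠ j → v m = w m) :
    ∑ n, c x k n * v n
      = (∑ n, c x k n * w n) + c x k i * (v i - w i) + c x k j * (v j - w j) := by
  have h1 : ∑ n, c x k n * v n - ∑ n, c x k n * w n = ∑ n, c x k n * (v n - w n) := by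
    rw [← Finset.sum_sub_distrib]
    exact Finset.sum_congr rfl fun n _ => (mul_sub _ _ _).symm
  have h2 : ∑ n, c x k n * (v n - w n)
      = ∑ n ∈ ({i, j} : Finset I), c x k n * (v n - w n) := by
    refine (Finset.sum_subset (Finset.subset_univ _) ?_).symm
    intro m _ hm
    simp only [Finset.mem_insert, Finset.mem_singleton, not_or] at hm
    rw [hvw m hm.1 hm.2, sub_self, mul_zero]
  rw [Finset.sum_pair hij] at h2
  linarith [h1, h2]

lemma refl_refl (hCS : IsCartanScheme ρ c) (x : A) (k : I) (v : I → ℤ) :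
    reflMap c (ρ k x) k (reflMap c x k v) = v := by
  have hc : ∀ n, c (ρ k x) k n = c x k n := fun n => (hCS.C2 x k n).symm
  funext m
  have hsum : ∑ n, c (ρ k x) k n * reflMap c x k v n = -∑ n, c x k n * v n := by
    have he : ∀ n, c (ρ k x) k n * reflMap c x k v n
        = c x k n * v n - (∑ p, c x k p * v p) * (c x k n * alphaV k n) := by
      intro n; rw [hc n, reflMap_apply]; ring
    rw [Finset.sum_congr rfl fun n _ => he n, Finset.sum_sub_distrib, ← Finset.mul_sum,
      sum_mul_alphaV, hCS.M1diag]
    ring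
  rw [reflMap_apply, hsum, reflMap_apply]
  ring

lemma refl_refl' (hCS : IsCartanScheme ρ c) (x : A) (k : I) (v : I → ℤ) :
    reflMap c x k (reflMap c (ρ k x) k v) = v := by
  have h := refl_refl hCS (ρ k x) k v
  rwa [hCS.C1] at h

lemma mem_refl (hRS : IsRootSystem ρ c R) {x : A} (k : I) {v : I → ℤ} (hv : v ∈ R x) :
    reflMap c x k v ∈ R (ρ k x) := by
  rw [← hRS.R3]
  exact Set.mem_image_of_mem _ hv

lemma nonneg_of_pos (hRS : IsRootSystem ρ c R) {x : A} {v : I → ℤ} (hv : v ∈ R x)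
    {m : I} (hm : 0 < v m) : ∀ n, 0 ≤ v n := by
  have h := hv
  rw [hRS.R1 x] at h
  rcases h with h | h
  · exact h.2
  · exfalso
    rw [Set.mem_neg] at h
    have := h.2 m
    rw [Pi.neg_apply] at this
    linarith

lemma alphaV_mem (hRS : IsRootSystem ρ c R) (x : A) (k : I) : alphaV k ∈ R x := by
  have h : alphaV k ∈ R x ∩ {v | ∃ z : ℤ, v = z • alphaV k} := by
    rw [hRS.R2 x k]
    exact Set.mem_insert _ _
  exact h.1

lemma mem_cone_iff {i j : I} (hij : i ≠ j) (s : Set (I → ℤ)) (v : I → ℤ) :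
    v ∈ coneIJ s i j ↔ v ∈ s ∧ 0 ≤ v i ∧ 0 ≤ v j ∧ ∀ m, m ≠ i → m ≠ j → v m = 0 := by
  constructor
  · rintro ⟨hv, p, q, rfl⟩
    refine ⟨hv, ?_, ?_, ?_⟩
    · simpa [alphaV, hij] using Int.natCast_nonneg p
    · simpa [alphaV, Ne.symm hij] using Int.natCast_nonneg q
    · intro m hmi hmj
      simp [alphaV, hmi, hmj]
  · rintro ⟨hv, hi, hj, hoff⟩
    refine ⟨hv, (v i).toNat, (v j).toNat, ?_⟩
    funext m
    by_cases hmi : m = i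
    · subst hmi
      simp [alphaV, hij, Int.toNat_of_nonneg hi]
    · by_cases hmj : m = j
      · subst hmj
        simp [alphaV, Ne.symm hij, Int.toNat_of_nonneg hj]
      · simp [alphaV, hmi, hmj, hoff m hmi hmj]

lemma cone_symm (s : Set (I → ℤ)) (i j : I) : coneIJ s i j = coneIJ s j i := by
  ext v
  constructor <;> rintro ⟨hv, p, q, rfl⟩ <;> exact ⟨hv, q, p, by rw [add_comm]⟩

lemma alphaV_mem_cone_left (hRS : IsRootSystem ρ c R) {i j : I} (hij : i ≠ j) (x : A) :
    alphaV i ∈ coneIJ (R x) i j := by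
  refine (mem_cone_iff hij _ _).mpr ⟨alphaV_mem hRS x i, ?_, ?_, ?_⟩
  · rw [alphaV_self]; norm_num
  · rw [alphaV_ne (Ne.symm hij)]
  · intro m hmi _; exact alphaV_ne hmi

lemma alphaV_mem_cone_right (hRS : IsRootSystem ρ c R) {i j : I} (hij : i ≠ j) (x : A) :
    alphaV j ∈ coneIJ (R x) i j := by
  refine (mem_cone_iff hij _ _).mpr ⟨alphaV_mem hRS x j, ?_, ?_, ?_⟩
  · rw [alphaV_ne hij]
  · rw [alphaV_self]; norm_num
  · intro m _ hmj; exact alphaV_ne hmj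

lemma cone_axis (hRS : IsRootSystem ρ c R) {i j : I} (hij : i ≠ j) (x : A) (v : I → ℤ)
    (hv : v ∈ coneIJ (R x) i j) (h0 : v j = 0) : v = alphaV i := by
  obtain ⟨hvR, hi, hj, hoff⟩ := (mem_cone_iff hij _ _).mp hv
  have hax : v ∈ R x ∩ {v | ∃ z : ℤ, v = z • alphaV i} := by
    refine ⟨hvR, v i, funext fun m => ?_⟩
    by_cases hmi : m = i
    · subst hmi; simp [alphaV]
    · by_cases hmj : m = j
      · subst hmj; simp [alphaV, Ne.symm hij, h0]
      · simp [alphaV, hmi, hoff m hmi hmj]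
  rw [hRS.R2] at hax
  rw [Set.mem_insert_iff, Set.mem_singleton_iff] at hax
  rcases hax with h | h
  · exact h
  · exfalso
    have := congrFun h i
    rw [Pi.neg_apply, alphaV_self] at this
    linarith

lemma refl_cone_step (hCS : IsCartanScheme ρ c) (hRS : IsRootSystem ρ c R)
    {i j : I} (hij : i ≠ j) (y : A) (v : I → ℤ)
    (hv : v ∈ coneIJ (R y) i j) (hne : v ≠ alphaV i) :
    reflMap c y i v ∈ coneIJ (R (ρ i y)) i j ∧ reflMap c y i v ≠ alphaV i := by
  obtain ⟨hvR, hvi, hvj, hoff⟩ := (mem_cone_iff hij _ _).mp hv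
  have hvjpos : 0 < v j := hvj.lt_of_ne fun h => hne (cone_axis hRS hij y v hv h.symm)
  have hwj : reflMap c y i v j = v j := reflMap_apply_ne (Ne.symm hij)
  have hwoff : ∀ m, m ≠ i → m ≠ j → reflMap c y i v m = 0 := fun m hmi hmj => by
    rw [reflMap_apply_ne hmi]; exact hoff m hmi hmj
  have hwR : reflMap c y i v ∈ R (ρ i y) := mem_refl hRS i hvR
  have hwpos : ∀ n, 0 ≤ reflMap c y i v n :=
    nonneg_of_pos hRS hwR (m := j) (by rw [hwj]; exact hvjpos)
  refine ⟨(mem_cone_iff hij _ _).mpr ⟨hwR, hwpos i, hwpos j, hwoff⟩, ?_⟩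
  intro h
  have h0 := congrFun h j
  rw [hwj, alphaV_ne (Ne.symm hij)] at h0
  linarith

lemma keyA (hCS : IsCartanScheme ρ c) (hRS : IsRootSystem ρ c R)
    {i j : I} (hij : i ≠ j) (x : A) (h3 : (coneIJ (R x) i j).ncard = 3) :
    (coneIJ (R (ρ i x)) i j).ncard = 3 := by
  have hfin : (coneIJ (R x) i j).Finite := finite_of_ncard3 h3
  have himg : coneIJ (R (ρ i x)) i j \ {alphaV i}
      = reflMap c x i '' (coneIJ (R x) i j \ {alphaV i}) := by
    ext w
    constructor
    · rintro ⟨hw, hwne⟩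
      rw [Set.mem_singleton_iff] at hwne
      have hstep := refl_cone_step hCS hRS hij (ρ i x) w hw hwne
      refine ⟨reflMap c (ρ i x) i w, ⟨?_, ?_⟩, refl_refl' hCS x i w⟩
      · have := hstep.1
        rwa [hCS.C1] at this
      · rw [Set.mem_singleton_iff]
        exact hstep.2
    · rintro ⟨v, ⟨hv, hvne⟩, rfl⟩
      rw [Set.mem_singleton_iff] at hvne
      have hstep := refl_cone_step hCS hRS hij x v hv hvne
      exact ⟨hstep.1, by rw [Set.mem_singleton_iff]; exact hstep.2⟩
  have hinj : Set.InjOn (reflMap c x i) (coneIJ (R x) i j \ {alphaV i}) := by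
    intro u _ w _ h
    have h' := congrArg (reflMap c (ρ i x) i) h
    rwa [refl_refl hCS, refl_refl hCS] at h'
  have h2 : (coneIJ (R x) i j \ {alphaV i}).ncard = 2 := by
    rw [Set.ncard_diff_singleton_of_mem (alphaV_mem_cone_left hRS hij x), h3]
  have h2' : (coneIJ (R (ρ i x)) i j \ {alphaV i}).ncard = 2 := by
    rw [himg, Set.ncard_image_of_injOn hinj, h2]
  have hfin' : (coneIJ (R (ρ i x)) i j).Finite := by
    have hd : (coneIJ (R (ρ i x)) i j \ {alphaV i}).Finite := by
      rw [himg]; exact hfin.diff.image _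
    have h4 := hd.insert (alphaV i)
    refine h4.subset ?_
    rw [Set.insert_diff_singleton]
    exact Set.subset_insert _ _
  have := Set.ncard_diff_singleton_add_one (alphaV_mem_cone_left hRS hij (ρ i x)) hfin'
  omega

lemma keyA' (hCS : IsCartanScheme ρ c) (hRS : IsRootSystem ρ c R)
    {i j : I} (hij : i ≠ j) (x : A) (h3 : (coneIJ (R x) i j).ncard = 3) :
    (coneIJ (R (ρ j x)) i j).ncard = 3 := by
  rw [cone_symm]
  exact keyA hCS hRS hij.symm x (by rw [cone_symm]; exact h3)

lemma keyB (hCS : IsCartanScheme ρ c) (hRS : IsRootSystem ρ c R)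
    {i j : I} (hij : i ≠ j) (x : A) (h3 : (coneIJ (R x) i j).ncard = 3)
    {β : I → ℤ} (hβ : β ∈ coneIJ (R x) i j) (hβi : β ≠ alphaV i) (hβj : β ≠ alphaV j) :
    β j = 1 ∧ β i = -(c x i j) := by
  have h3' := keyA hCS hRS hij x h3
  have hS'fin : (coneIJ (R (ρ i x)) i j).Finite := finite_of_ncard3 h3'
  obtain ⟨hβR, hβ0i, hβ0j, hβoff⟩ := (mem_cone_iff hij _ _).mp hβ
  have hstep := refl_cone_step hCS hRS hij x β hβ hβi
  have hφβi : reflMap c x i β i = -(β i) - c x i j * β j := by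
    rw [reflMap_apply_self,
      sum_offIJ hij x i β (fun _ => 0) (fun m hmi hmj => hβoff m hmi hmj),
      hCS.M1diag]
    simp
    ring
  have hβjpos : 0 < β j := hβ0j.lt_of_ne fun h => hβi (cone_axis hRS hij x β hβ h.symm)
  have hβ_symm : β ∈ coneIJ (R x) j i := by rw [← cone_symm]; exact hβ
  have hβipos : 0 < β i := hβ0i.lt_of_ne fun h =>
    hβj (cone_axis hRS hij.symm x β hβ_symm h.symm)
  have hc0 : c x i j ≠ 0 := by
    intro h0
    have h1 : 0 ≤ reflMap c x i β i := ((mem_cone_iff hij _ _).mp hstep.1).2.1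
    rw [hφβi, h0] at h1
    linarith
  have hcneg : c x i j < 0 := (hCS.M1off x i j hij).lt_of_ne hc0
  have hαjc : alphaV j ∈ coneIJ (R x) i j := alphaV_mem_cone_right hRS hij x
  have hαji : alphaV j ≠ alphaV i := fun h => by
    have := congrFun h j
    rw [alphaV_self, alphaV_ne (Ne.symm hij)] at this
    exact one_ne_zero this
  have hγstep := refl_cone_step hCS hRS hij x (alphaV j) hαjc hαji
  have hγi : reflMap c x i (alphaV j) i = -(c x i j) := by
    rw [reflMap_apply_self, sum_mul_alphaV, alphaV_ne hij]
    ring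
  have hkey : reflMap c x i β = alphaV j := by
    by_contra hne
    have hne1 : alphaV j ≠ reflMap c x i (alphaV j) := fun h => by
      have := congrFun h i
      rw [hγi, alphaV_ne hij] at this
      linarith
    have hne2 : reflMap c x i (alphaV j) ≠ reflMap c x i β := fun h => by
      have h' := congrArg (reflMap c (ρ i x) i) h
      rw [refl_refl hCS, refl_refl hCS] at h'
      exact hβj h'.symm
    have hne3 : alphaV j ≠ reflMap c x i β := fun h => hne h.symm
    have hsub : ({alphaV j, reflMap c x i (alphaV j), reflMap c x i β} : Set (I → ℤ))
        ⊆ coneIJ (R (ρ i x)) i j \ {alphaV i} := by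
      intro w hw
      simp only [Set.mem_insert_iff, Set.mem_singleton_iff] at hw
      rcases hw with rfl | rfl | rfl
      · exact ⟨alphaV_mem_cone_right hRS hij (ρ i x), by
          rw [Set.mem_singleton_iff]; exact hαji⟩
      · exact ⟨hγstep.1, by rw [Set.mem_singleton_iff]; exact hγstep.2⟩
      · exact ⟨hstep.1, by rw [Set.mem_singleton_iff]; exact hstep.2⟩
    have hcard : ({alphaV j, reflMap c x i (alphaV j), reflMap c x i β} : Set (I → ℤ)).ncard
        = 3 := by
      rw [Set.ncard_insert_of_notMem (by simp [hne1, hne3]), Set.ncard_pair hne2]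
    have hle := Set.ncard_le_ncard hsub hS'fin.diff
    have hdiff : (coneIJ (R (ρ i x)) i j \ {alphaV i}).ncard = 2 := by
      rw [Set.ncard_diff_singleton_of_mem (alphaV_mem_cone_left hRS hij (ρ i x)), h3']
    rw [hcard, hdiff] at hle
    omega
  have hβeq : β = reflMap c (ρ i x) i (alphaV j) := by
    rw [← hkey, refl_refl hCS]
  constructor
  · rw [hβeq, reflMap_apply_ne (Ne.symm hij), alphaV_self]
  · rw [hβeq, reflMap_apply_self, sum_mul_alphaV, alphaV_ne hij, ← hCS.C2]
    ring

lemma keyC (hCS : IsCartanScheme ρ c) (hRS : IsRootSystem ρ c R)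
    {i j : I} (hij : i ≠ j) (x : A) (h3 : (coneIJ (R x) i j).ncard = 3) :
    c x i j = -1 ∧ c x j i = -1 := by
  have hfin : (coneIJ (R x) i j).Finite := finite_of_ncard3 h3
  have hαij : alphaV i ≠ alphaV j := fun h => by
    have := congrFun h i
    rw [alphaV_self, alphaV_ne hij] at this
    exact one_ne_zero this
  have hpair_sub : ({alphaV i, alphaV j} : Set (I → ℤ)) ⊆ coneIJ (R x) i j := by
    rw [Set.insert_subset_iff, Set.singleton_subset_iff]
    exact ⟨alphaV_mem_cone_left hRS hij x, alphaV_mem_cone_right hRS hij x⟩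
  have hd : (coneIJ (R x) i j \ {alphaV i, alphaV j}).ncard = 1 := by
    rw [Set.ncard_diff hpair_sub (Set.toFinite _), Set.ncard_pair hαij, h3]
  have hne : (coneIJ (R x) i j \ {alphaV i, alphaV j}).Nonempty := by
    apply Set.nonempty_of_ncard_ne_zero
    rw [hd]
    norm_num
  obtain ⟨β, hβmem, hβnot⟩ := hne
  simp only [Set.mem_insert_iff, Set.mem_singleton_iff, not_or] at hβnot
  have h1 := keyB hCS hRS hij x h3 hβmem hβnot.1 hβnot.2
  have hβ_symm : β ∈ coneIJ (R x) j i := by rw [← cone_symm]; exact hβmem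
  have h2 := keyB hCS hRS hij.symm x (by rw [← cone_symm]; exact h3) hβ_symm hβnot.2 hβnot.1
  constructor
  · have := h1.2
    rw [h2.1] at this
    linarith
  · have := h2.2
    rw [h1.1] at this
    linarith

lemma refl_coord {i j : I} (hij : i ≠ j) {l : I} (hli : l ≠ i) (hlj : l ≠ j)
    (x : A) (k : I) (v : I → ℤ) (hbg : ∀ m, m ≠ i → m ≠ j → v m = alphaV l m) :
    reflMap c x k v k = v k - (c x k l + c x k i * v i + c x k j * v j) := by
  rw [reflMap_apply_self, sum_offIJ hij x k v (alphaV l) hbg, sum_mul_alphaV,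
    alphaV_ne (Ne.symm hli), alphaV_ne (Ne.symm hlj)]
  ring

lemma chain_j (hCS : IsCartanScheme ρ c) {i j : I} (hij : i ≠ j)
    {l : I} (hli : l ≠ i) (hlj : l ≠ j) (x : A) (v : I → ℤ)
    (hbg : ∀ m, m ≠ i → m ≠ j → v m = alphaV l m)
    (h1 : c x i j = -1) (h2 : c (ρ i x) j i = -1) :
    reflMap c (ρ j (ρ i x)) i (reflMap c (ρ i x) j (reflMap c x i v)) j
      = -(c (ρ i x) j l) - c x i l - v i := by
  have hbg1 : ∀ m, m ≠ i → m ≠ j → reflMap c x i v m = alphaV l m := fun m hmi hmj => by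
    rw [reflMap_apply_ne hmi]; exact hbg m hmi hmj
  have hv1i : reflMap c x i v i
      = v i - (c x i l + c x i i * v i + c x i j * v j) :=
    refl_coord hij hli hlj x i v hbg
  have hv1j : reflMap c x i v j = v j := reflMap_apply_ne (Ne.symm hij)
  have hv2j : reflMap c (ρ i x) j (reflMap c x i v) j
      = reflMap c x i v j - (c (ρ i x) j l + c (ρ i x) j i * reflMap c x i v i
        + c (ρ i x) j j * reflMap c x i v j) :=
    refl_coord hij hli hlj (ρ i x) j (reflMap c x i v) hbg1
  rw [reflMap_apply_ne (Ne.symm hij), hv2j, hv1i, hv1j, h1, h2,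
    hCS.M1diag, hCS.M1diag]
  ring

lemma chain2_j (hCS : IsCartanScheme ρ c) {i j : I} (hij : i ≠ j)
    {l : I} (hli : l ≠ i) (hlj : l ≠ j) (x : A) (v : I → ℤ)
    (hbg : ∀ m, m ≠ i → m ≠ j → v m = alphaV l m)
    (h2 : c (ρ j x) i j = -1) (h3 : c (ρ i (ρ j x)) j i = -1) :
    reflMap c (ρ i (ρ j x)) j (reflMap c (ρ j x) i (reflMap c x j v)) j
      = -(c (ρ i (ρ j x)) j l) - c (ρ j x) i l - v i := by
  have hbg1 : ∀ m, m ≠ i → m ≠ j → reflMap c x j v m = alphaV l m := fun m hmi hmj => by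
    rw [reflMap_apply_ne hmj]; exact hbg m hmi hmj
  have hbg2 : ∀ m, m ≠ i → m ≠ j → reflMap c (ρ j x) i (reflMap c x j v) m = alphaV l m :=
    fun m hmi hmj => by
      rw [reflMap_apply_ne hmi]; exact hbg1 m hmi hmj
  have hv1j : reflMap c x j v j
      = v j - (c x j l + c x j i * v i + c x j j * v j) :=
    refl_coord hij hli hlj x j v hbg
  have hv1i : reflMap c x j v i = v i := reflMap_apply_ne hij
  have hv2i : reflMap c (ρ j x) i (reflMap c x j v) i
      = reflMap c x j v i - (c (ρ j x) i l + c (ρ j x) i i * reflMap c x j v i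
        + c (ρ j x) i j * reflMap c x j v j) :=
    refl_coord hij hli hlj (ρ j x) i (reflMap c x j v) hbg1
  have hv2j : reflMap c (ρ j x) i (reflMap c x j v) j = reflMap c x j v j :=
    reflMap_apply_ne (Ne.symm hij)
  have hv3j : reflMap c (ρ i (ρ j x)) j (reflMap c (ρ j x) i (reflMap c x j v)) j
      = reflMap c (ρ j x) i (reflMap c x j v) j
        - (c (ρ i (ρ j x)) j l
          + c (ρ i (ρ j x)) j i * reflMap c (ρ j x) i (reflMap c x j v) i
          + c (ρ i (ρ j x)) j j * reflMap c (ρ j x) i (reflMap c x j v) j) :=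
    refl_coord hij hli hlj (ρ i (ρ j x)) j _ hbg2
  rw [hv3j, hv2i, hv2j, hv1i, hv1j, h2, h3, hCS.M1diag x j, hCS.M1diag (ρ j x) i, hCS.M1diag (ρ i (ρ j x)) j]
  ring

end Aux

/-- if `m_{i,j}^a = 3` then
`c^{ρ_i(a)}_{il} + c^{ρ_i(a)}_{jl} = c^{ρ_iρ_j(a)}_{il} + c^{ρ_iρ_j(a)}_{jl}` for all `l`. -/
theorem stmt7 {I A : Type*} [DecidableEq I] [Fintype I] [Nonempty I] [Nonempty A]
    (ρ : I → A → A) (c : A → I → I → ℤ) (R : A → Set (I → ℤ))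
    (hCS : IsCartanScheme ρ c) (hRS : IsRootSystem ρ c R)
    (a : A) (i j : I) (hm : (coneIJ (R a) i j).ncard = 3) :
    ∀ l : I, c (ρ i a) i l + c (ρ i a) j l = c (ρ i (ρ j a)) i l + c (ρ i (ρ j a)) j l := by
  intro l
  have hij : i ≠ j := by
    intro h
    subst h
    have hsub : coneIJ (R a) i i ⊆ {alphaV i} := by
      rintro v ⟨hv, p, q, rfl⟩
      have hax : ((p : ℤ) • alphaV i + (q : ℤ) • alphaV i)
          ∈ R a ∩ {v | ∃ z : ℤ, v = z • alphaV i} :=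
        ⟨hv, (p : ℤ) + q, by rw [add_smul]⟩
      rw [hRS.R2, Set.mem_insert_iff, Set.mem_singleton_iff] at hax
      rcases hax with h1 | h1
      · rw [Set.mem_singleton_iff]
        exact h1
      · exfalso
        have := congrFun h1 i
        simp [alphaV] at this
        omega
    have hle := Set.ncard_le_ncard hsub (Set.finite_singleton _)
    rw [hm, Set.ncard_singleton] at hle
    omega
  have hfin : (coneIJ (R a) i j).Finite := finite_of_ncard3 hm
  have hcA := keyC hCS hRS hij a hm
  have hA1 : (coneIJ (R (ρ i a)) i j).ncard = 3 := keyA hCS hRS hij a hm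
  have hB1 : (coneIJ (R (ρ j a)) i j).ncard = 3 := keyA' hCS hRS hij a hm
  have hcA1 := keyC hCS hRS hij (ρ i a) hA1
  have hcB1 := keyC hCS hRS hij (ρ j a) hB1
  have hB2 : (coneIJ (R (ρ i (ρ j a))) i j).ncard = 3 := keyA hCS hRS hij (ρ j a) hB1
  have hcB2 := keyC hCS hRS hij (ρ i (ρ j a)) hB2
  -- hexagon object identity
  have h6 := hRS.R4 a i j hij hfin
  rw [hm] at h6
  have h6' : ρ i (ρ j (ρ i (ρ j (ρ i (ρ j a))))) = a := by
    simpa [Function.comp] using h6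
  have h7 : ρ i (ρ j (ρ i a)) = ρ j (ρ i (ρ j a)) := by
    have e1 : ρ i a = ρ j (ρ i (ρ j (ρ i (ρ j a)))) := by
      conv_lhs => rw [← h6']
      rw [hCS.C1]
    have e2 : ρ j (ρ i a) = ρ i (ρ j (ρ i (ρ j a))) := by
      rw [e1, hCS.C1]
    rw [e2, hCS.C1]
  by_cases hli : l = i
  · subst hli
    rw [hCS.M1diag, hCS.M1diag, hcA1.2, hcB2.2]
  by_cases hlj : l = j
  · subst hlj
    rw [hCS.M1diag, hCS.M1diag, hcA1.1, hcB2.1]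
  -- main case
  have can : ∀ (x : A) (k : I) (w : I → ℤ),
      reflMap c x k (reflMap c (ρ k x) k w) = w := fun x k w => refl_refl' hCS x k w
  set v3 := reflMap c (ρ j (ρ i a)) i (reflMap c (ρ i a) j (reflMap c a i (alphaV l)))
    with hv3def
  set w3 := reflMap c (ρ i (ρ j a)) j (reflMap c (ρ j a) i (reflMap c a j (alphaV l)))
    with hw3def
  set z := reflMap c (ρ j a) j
      (reflMap c (ρ i (ρ j a)) i (reflMap c (ρ i (ρ j (ρ i a))) j v3)) with hzdef
  set u6 := reflMap c (ρ i a) i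
      (reflMap c (ρ j (ρ i a)) j (reflMap c (ρ i (ρ j (ρ i a))) i w3)) with hu6def
  -- memberships
  have hαlR : alphaV l ∈ R a := alphaV_mem hRS a l
  have hv3R : v3 ∈ R (ρ i (ρ j (ρ i a))) :=
    mem_refl hRS i (mem_refl hRS j (mem_refl hRS i hαlR))
  have hw3R0 : w3 ∈ R (ρ j (ρ i (ρ j a))) :=
    mem_refl hRS j (mem_refl hRS i (mem_refl hRS j hαlR))
  have hw3R : w3 ∈ R (ρ i (ρ j (ρ i a))) := by rw [h7]; exact hw3R0
  have hzR : z ∈ R a := by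
    have m1 := mem_refl hRS (x := ρ i (ρ j (ρ i a))) j hv3R
    have hobj1 : ρ j (ρ i (ρ j (ρ i a))) = ρ i (ρ j a) := by
      rw [h7, hCS.C1]
    rw [hobj1] at m1
    have m2 := mem_refl hRS (x := ρ i (ρ j a)) i m1
    rw [hCS.C1] at m2
    have m3 := mem_refl hRS (x := ρ j a) j m2
    rw [hCS.C1] at m3
    exact m3
  have hu6R : u6 ∈ R a := by
    have m1 := mem_refl hRS (x := ρ i (ρ j (ρ i a))) i hw3R
    rw [hCS.C1] at m1
    have m2 := mem_refl hRS (x := ρ j (ρ i a)) j m1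
    rw [hCS.C1] at m2
    have m3 := mem_refl hRS (x := ρ i a) i m2
    rw [hCS.C1] at m3
    exact m3
  -- backgrounds
  have hbgz : ∀ m, m ≠ i → m ≠ j → z m = alphaV l m := by
    intro m hmi hmj
    rw [hzdef, hv3def]
    simp only [reflMap_apply_ne hmi, reflMap_apply_ne hmj]
  have hbgu6 : ∀ m, m ≠ i → m ≠ j → u6 m = alphaV l m := by
    intro m hmi hmj
    rw [hu6def, hw3def]
    simp only [reflMap_apply_ne hmi, reflMap_apply_ne hmj]
  have hzl : 0 < z l := by
    rw [hbgz l hli hlj, alphaV_self]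
    norm_num
  have hu6l : 0 < u6 l := by
    rw [hbgu6 l hli hlj, alphaV_self]
    norm_num
  have hzi : 0 ≤ z i := nonneg_of_pos hRS hzR hzl i
  have hu6i : 0 ≤ u6 i := nonneg_of_pos hRS hu6R hu6l i
  -- cancellation relations
  have rel1 : reflMap c (ρ i (ρ j a)) j (reflMap c (ρ j a) i (reflMap c a j z)) = v3 := by
    rw [hzdef, can a j, can (ρ j a) i, h7]
    exact can (ρ i (ρ j a)) j v3
  have rel2 : reflMap c (ρ j (ρ i a)) i (reflMap c (ρ i a) j (reflMap c a i u6)) = w3 := by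
    rw [hu6def, can a i, can (ρ i a) j]
    exact can (ρ j (ρ i a)) i w3
  -- coordinate computations
  have hbgαl : ∀ m, m ≠ i → m ≠ j → alphaV l m = alphaV l m := fun _ _ _ => rfl
  have cj1 : v3 j = -(c (ρ i a) j l) - c a i l - alphaV l i := by
    rw [hv3def]
    exact chain_j hCS hij hli hlj a (alphaV l) hbgαl hcA.1 hcA1.2
  have cj2 : w3 j = -(c (ρ i a) j l) - c a i l - u6 i := by
    rw [← rel2]
    exact chain_j hCS hij hli hlj a u6 hbgu6 hcA.1 hcA1.2
  have cj3 : w3 j = -(c (ρ i (ρ j a)) j l) - c (ρ j a) i l - alphaV l i := by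
    rw [hw3def]
    exact chain2_j hCS hij hli hlj a (alphaV l) hbgαl hcB1.1 hcB2.2
  have cj4 : v3 j = -(c (ρ i (ρ j a)) j l) - c (ρ j a) i l - z i := by
    rw [← rel1]
    exact chain2_j hCS hij hli hlj a z hbgz hcB1.1 hcB2.2
  have hαli : alphaV l i = 0 := alphaV_ne (Ne.symm hli)
  rw [hαli, sub_zero] at cj1 cj3
  rw [← hCS.C2 a i l, ← hCS.C2 (ρ j a) i l]
  have e1 : -(c (ρ i a) j l) - c a i l
      = -(c (ρ i (ρ j a)) j l) - c (ρ j a) i l - z i := by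
    rw [← cj1, cj4]
  have e2 : -(c (ρ i (ρ j a)) j l) - c (ρ j a) i l
      = -(c (ρ i a) j l) - c a i l - u6 i := by
    rw [← cj3, cj2]
  linarith
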